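/- Let J ∈ B(H) be an anti self-adjoint unitary operator on H = ℓ²(ℕ, ℍ) and m ∈ 𝕊. If {e_r : r ∈ ℕ} is an orthonormal basis of the slice Hilbert space H_+^{Jm} (over the field ℂ_m), then {e_r : r ∈ ℕ} is an orthonormal basis of the quaternionic Hilbert space H, i.e., ⟨e_r, e_s⟩ = δ_{rs} and every x ∈ H satisfies x = ∑_r e_r⟨e_r, x⟩. -/

import Mathlib

noncomputable section

open Quaternion Filter Topology

/-- The division ring `ℍ` of real quaternions. -/
abbrev Hq := Quaternion ℝ

/-- The quaternionic Hilbert space `H = ℓ²(ℕ, ℍ)`. -/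
abbrev Hsp := lp (fun _ : ℕ => Hq) 2

/-- Right scalar multiplication `x ↦ x · q` on `ℓ²(ℕ, ℍ)` (coordinatewise right
multiplication by the quaternion `q`). -/
def rsmul (q : Hq) (x : Hsp) : Hsp := MulOpposite.op q • x

/-- The quaternionic inner product `⟨x, y⟩ = ∑ₙ x̄ₙ yₙ`. -/
def qinner (x y : Hsp) : Hq := ∑' n, star (x n) * y n

/-- The set `𝕊` of unit imaginary quaternions. -/
def QS : Set Hq := {q | star q = -q ∧ ‖q‖ = 1}

/-- The slice complex plane `ℂ_m = {α + mβ : α, β ∈ ℝ}`. -/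
def sliceC (m : Hq) : Set Hq := {q | ∃ α β : ℝ, q = (α : Hq) + m * (β : Hq)}

/-- The closed upper half slice plane `ℂ_m⁺ = {α + mβ : α ∈ ℝ, β ≥ 0}`. -/
def sliceCplus (m : Hq) : Set Hq :=
  {q | ∃ α β : ℝ, 0 ≤ β ∧ q = (α : Hq) + m * (β : Hq)}

/-- `T : H → H` is a bounded right linear operator, i.e. `T ∈ B(H)`. -/
def IsBoundedRightLinear (T : Hsp → Hsp) : Prop :=
  (∀ x y, T (x + y) = T x + T y) ∧ (∀ q x, T (rsmul q x) = rsmul q (T x)) ∧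
    ∃ M : ℝ, ∀ x, ‖T x‖ ≤ M * ‖x‖

/-- `S` is the adjoint of the (bounded) operator `T`: `⟨y, Tx⟩ = ⟨Sy, x⟩` for all `x, y`. -/
def AdjointOf (T S : Hsp → Hsp) : Prop := ∀ x y, qinner y (T x) = qinner (S y) x

/-- `T` is anti self-adjoint: `T* = -T`. -/
def IsAntiSelfAdjoint (T : Hsp → Hsp) : Prop := AdjointOf T (fun x => -(T x))

/-- `T` is unitary: `T*T = TT* = I`. -/
def IsUnitaryOp (T : Hsp → Hsp) : Prop :=
  ∃ S, AdjointOf T S ∧ (∀ x, S (T x) = x) ∧ (∀ x, T (S x) = x)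

/-- The slice Hilbert space `H₊^{Jm} = {u ∈ H : Ju = um}`. -/
def Hplus (J : Hsp → Hsp) (m : Hq) : Set Hsp := {u | J u = rsmul m u}

/-- `H₋^{Jm} = {u ∈ H : Ju = -um}`. -/
def Hminus (J : Hsp → Hsp) (m : Hq) : Set Hsp := {u | J u = -(rsmul m u)}

/-- `e` is an orthonormal basis of the (closed subspace given by the) set `S`:
each `e r` lies in `S`, the `e r` are orthonormal, and every `x ∈ S` expands as
`x = ∑ᵣ (e r) ⟨e r, x⟩`. Taking `S = Set.univ` gives orthonormal bases of `H`. -/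
def IsONBasisOn (S : Set Hsp) (e : ℕ → Hsp) : Prop :=
  (∀ r, e r ∈ S) ∧ (∀ r s, qinner (e r) (e s) = if r = s then 1 else 0) ∧
    ∀ x ∈ S, HasSum (fun r => rsmul (qinner (e r) x) (e r)) x

/-- A (possibly unbounded) operator in `H`: a domain together with an assignment of
values (only the values on the domain are relevant). -/
structure QOp where
  dom : Set Hsp
  app : Hsp → Hsp

/-- The operator `T` is right linear: its domain is a right `ℍ`-submodule and `T`
is additive and right `ℍ`-homogeneous on it. -/
def QOp.IsRightLinear (T : QOp) : Prop :=
  (0 ∈ T.dom) ∧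
  (∀ x ∈ T.dom, ∀ y ∈ T.dom, x + y ∈ T.dom ∧ T.app (x + y) = T.app x + T.app y) ∧
  (∀ x ∈ T.dom, ∀ q : Hq, rsmul q x ∈ T.dom ∧ T.app (rsmul q x) = rsmul q (T.app x))

/-- `T` is densely defined. -/
def QOp.IsDenselyDefined (T : QOp) : Prop := Dense T.dom

/-- `T` is a closed operator: its graph is closed in `H × H`. -/
def QOp.IsClosedOp (T : QOp) : Prop :=
  IsClosed {p : Hsp × Hsp | p.1 ∈ T.dom ∧ p.2 = T.app p.1}

/-- `S` is the adjoint `T*` of `T`: the domain of `S` is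
`{y : x ↦ ⟨y, Tx⟩ is continuous on D(T)}` and `⟨y, Tx⟩ = ⟨Sy, x⟩` there. -/
def QOp.IsAdjointOf (T S : QOp) : Prop :=
  S.dom = {y | ContinuousOn (fun x => qinner y (T.app x)) T.dom} ∧
  ∀ y ∈ S.dom, ∀ x ∈ T.dom, qinner y (T.app x) = qinner (S.app y) x

/-- Composition `S ∘ T` of partial operators, with the natural domain. -/
def QOp.comp (S T : QOp) : QOp :=
  ⟨{x ∈ T.dom | T.app x ∈ S.dom}, fun x => S.app (T.app x)⟩

/-- Equality of partial operators: equal domains and equal values on the domain. -/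
def QOp.Eq (A B : QOp) : Prop := A.dom = B.dom ∧ ∀ x ∈ A.dom, A.app x = B.app x

/-- `T` is normal: `T*T = TT*` (including equality of the domains). -/
def QOp.IsNormal (T : QOp) : Prop :=
  ∃ S : QOp, T.IsAdjointOf S ∧ QOp.Eq (S.comp T) (T.comp S)

/-- `T` is compact (as an operator on the subspace `S` of `H`): the image of the
closed unit ball of `S` is relatively compact. -/
def IsCompactOn (T : Hsp → Hsp) (S : Set Hsp) : Prop :=
  IsCompact (closure (T '' (Metric.closedBall 0 1 ∩ S)))

/-- `T` has squared Hilbert–Schmidt norm `v` on the subspace `S`: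
`∑ᵣ ‖T eᵣ‖² = v` for some orthonormal basis `e` of `S`. -/
def HasHSNormSqOn (T : Hsp → Hsp) (S : Set Hsp) (v : ℝ) : Prop :=
  ∃ e : ℕ → Hsp, IsONBasisOn S e ∧ HasSum (fun r => ‖T (e r)‖ ^ 2) v

/-- `T` is diagonal: there are an orthonormal basis `{φᵣ}` of `H` contained in `D(T)`
and quaternions `qᵣ` with `Tφᵣ = φᵣ qᵣ`. -/
def QOp.IsDiagonal (T : QOp) : Prop :=
  ∃ e : ℕ → Hsp, IsONBasisOn Set.univ e ∧ (∀ r, e r ∈ T.dom) ∧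
    ∃ q : ℕ → Hq, ∀ r, T.app (e r) = rsmul (q r) (e r)

/-- The operator `Δ_q(N) = N² - N(q + q̄) + I|q|²` for a bounded operator `N`. -/
def sphDeltaB (N : Hsp → Hsp) (q : Hq) : Hsp → Hsp :=
  fun x => N (N x) - rsmul (q + star q) (N x) + rsmul ((normSq q : ℝ) : Hq) x

/-- `q` lies in the spherical resolvent of the bounded operator `N`. -/
def inSphResolventB (N : Hsp → Hsp) (q : Hq) : Prop :=
  (∀ x, sphDeltaB N q x = 0 → x = 0) ∧
  Dense (Set.range (sphDeltaB N q)) ∧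
  ∃ M : ℝ, ∀ x, ‖x‖ ≤ M * ‖sphDeltaB N q x‖

/-- The spherical spectrum of a bounded operator. -/
def sphSpectrumB (N : Hsp → Hsp) : Set Hq := {q | ¬ inSphResolventB N q}

/-- The domain `D(N²)` of the square of a partial operator. -/
def QOp.sqDom (N : QOp) : Set Hsp := {x ∈ N.dom | N.app x ∈ N.dom}

/-- The map underlying `Δ_q(N) = N² - N(q + q̄) + I|q|²`, defined on `D(N²)`. -/
def sphDeltaU (N : QOp) (q : Hq) : Hsp → Hsp :=
  fun x => N.app (N.app x) - rsmul (q + star q) (N.app x) + rsmul ((normSq q : ℝ) : Hq) x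

/-- `q` lies in the spherical resolvent of the operator `N ∈ C(H)`. -/
def inSphResolventU (N : QOp) (q : Hq) : Prop :=
  (∀ x ∈ N.sqDom, sphDeltaU N q x = 0 → x = 0) ∧
  Dense (sphDeltaU N q '' N.sqDom) ∧
  ∃ M : ℝ, ∀ x ∈ N.sqDom, ‖x‖ ≤ M * ‖sphDeltaU N q x‖

/-- The spherical spectrum of `N ∈ C(H)`. -/
def sphSpectrumU (N : QOp) : Set Hq := {q | ¬ inSphResolventU N q}

/-- The circularization `Ω_K = {α + jβ : α + mβ ∈ K, j ∈ 𝕊}` of `K ⊆ ℂ_m`. -/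
def circ (m : Hq) (K : Set Hq) : Set Hq :=
  {p | ∃ α β : ℝ, ∃ j ∈ QS, ((α : Hq) + m * (β : Hq) ∈ K) ∧ p = (α : Hq) + j * (β : Hq)}


/-! ### Auxiliary lemmas -/

section Aux

lemma rsmul_apply' (q : Hq) (x : Hsp) (n : ℕ) : (rsmul q x) n = x n * q := by
  simp [rsmul, lp.coeFn_smul, MulOpposite.smul_eq_mul_unop]

lemma summable_sq' (x : Hsp) : Summable (fun n => ‖x n‖ ^ (2:ℕ)) := by
  have := lp.memℓp x
  rw [memℓp_gen_iff (by norm_num)] at this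
  convert this using 2
  norm_num

lemma summable_qinner' (x y : Hsp) : Summable (fun n => star (x n) * y n) := by
  apply Summable.of_norm
  have h : ∀ n, ‖star (x n) * y n‖ ≤ ‖x n‖^2 + ‖y n‖^2 := by
    intro n
    rw [norm_mul, norm_star]
    nlinarith [norm_nonneg (x n), norm_nonneg (y n), sq_nonneg (‖x n‖ - ‖y n‖)]
  exact Summable.of_nonneg_of_le (fun n => norm_nonneg _) h
    ((summable_sq' x).add (summable_sq' y))

lemma qinner_add_right' (x y z : Hsp) : qinner x (y + z) = qinner x y + qinner x z := by
  unfold qinner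
  rw [← Summable.tsum_add (summable_qinner' x y) (summable_qinner' x z)]
  exact tsum_congr fun n => by simp only [lp.coeFn_add, Pi.add_apply, mul_add]

lemma qinner_add_left' (x y z : Hsp) : qinner (x + y) z = qinner x z + qinner y z := by
  unfold qinner
  rw [← Summable.tsum_add (summable_qinner' x z) (summable_qinner' y z)]
  exact tsum_congr fun n => by simp only [lp.coeFn_add, Pi.add_apply, star_add, add_mul]

lemma qinner_neg_left' (x z : Hsp) : qinner (-x) z = -qinner x z := by
  unfold qinner
  rw [← tsum_neg]
  exact tsum_congr fun n => by simp only [lp.coeFn_neg, Pi.neg_apply, star_neg, neg_mul]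

lemma qinner_rsmul_right' (x y : Hsp) (q : Hq) : qinner x (rsmul q y) = qinner x y * q := by
  unfold qinner
  rw [← (summable_qinner' x y).tsum_mul_right q]
  exact tsum_congr fun n => by rw [rsmul_apply', mul_assoc]

lemma qinner_self_eq_zero' {z : Hsp} (h : qinner z z = 0) : z = 0 := by
  have hs := summable_qinner' z z
  have hh : HasSum (fun n => star (z n) * z n) 0 := h ▸ hs.hasSum
  have hre : HasSum (fun n => (star (z n) * z n).re) 0 := by
    have := hh.map (show Hq →ₗ[ℝ] ℝ from QuaternionAlgebra.reₗ _ _ _) Quaternion.continuous_re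
    rw [map_zero] at this
    exact this
  have key : ∀ n, star (z n) * z n = ((normSq (z n) : ℝ) : Hq) := fun n => by
    exact_mod_cast Quaternion.star_mul_self (z n)
  have hnn : ∀ n, 0 ≤ (star (z n) * z n).re := fun n => by
    rw [key n]; simpa using normSq_nonneg (a := z n)
  have hzero : ∀ n, (star (z n) * z n).re = 0 := by
    intro n
    have h1 := le_hasSum hre n (fun j _ => hnn j)
    linarith [hnn n]
  apply lp.ext
  funext n
  have h2 : (normSq (z n) : ℝ) = 0 := by
    have h3 := hzero n
    rw [key n] at h3
    simpa using h3
  simpa using normSq_eq_zero.mp h2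

lemma rsmul_add' (q : Hq) (x y : Hsp) : rsmul q (x + y) = rsmul q x + rsmul q y := by
  simp [rsmul, smul_add]

lemma add_rsmul' (p q : Hq) (x : Hsp) : rsmul (p + q) x = rsmul p x + rsmul q x := by
  simp [rsmul, add_smul]

lemma rsmul_sub' (q : Hq) (x y : Hsp) : rsmul q (x - y) = rsmul q x - rsmul q y := by
  simp [rsmul, smul_sub]

lemma rsmul_neg' (q : Hq) (x : Hsp) : rsmul q (-x) = -rsmul q x := by
  simp [rsmul]

lemma neg_rsmul' (q : Hq) (x : Hsp) : rsmul (-q) x = -rsmul q x := by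
  simp [rsmul]

lemma rsmul_one' (x : Hsp) : rsmul 1 x = x := by simp [rsmul]

lemma rsmul_rsmul' (q p : Hq) (x : Hsp) : rsmul q (rsmul p x) = rsmul (p * q) x := by
  simp [rsmul, smul_smul, ← MulOpposite.op_mul]

lemma rsmul_neg_one' (x : Hsp) : rsmul (-1) x = -x := by
  rw [neg_rsmul', rsmul_one']

lemma QS_re' {m : Hq} (hm : m ∈ QS) : m.re = 0 := by
  have h := hm.1
  have : (star m).re = (-m).re := by rw [h]
  simp at this
  linarith

lemma norm_of_normSq' {n : Hq} (h : normSq n = 1) : ‖n‖ = 1 := by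
  rw [norm_eq_sqrt_real_inner, Quaternion.inner_self, h, Real.sqrt_one]

lemma QS_mul_self' {m : Hq} (hm : m ∈ QS) : m * m = -1 := by
  have h1 : star m * m = ((normSq m : ℝ) : Hq) := by exact_mod_cast Quaternion.star_mul_self m
  have h2 : normSq m = 1 := by
    rw [Quaternion.normSq_eq_norm_mul_self, hm.2]; ring
  rw [hm.1, h2, neg_mul] at h1
  simp at h1
  exact neg_eq_iff_eq_neg.mp h1

def qmk (a b c d : ℝ) : Hq := ⟨a, b, c, d⟩

@[simp] lemma qmk_re (a b c d : ℝ) : (qmk a b c d).re = a := rfl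
@[simp] lemma qmk_imI (a b c d : ℝ) : (qmk a b c d).imI = b := rfl
@[simp] lemma qmk_imJ (a b c d : ℝ) : (qmk a b c d).imJ = c := rfl
@[simp] lemma qmk_imK (a b c d : ℝ) : (qmk a b c d).imK = d := rfl

lemma exists_anticomm' {m : Hq} (hm : m ∈ QS) :
    ∃ n ∈ QS, m * n = -(n * m) := by
  have hre := QS_re' hm
  by_cases hbc : m.imJ = 0 ∧ m.imK = 0
  · refine ⟨(qmk 0 0 1 0), ⟨?_, ?_⟩, ?_⟩
    · show star (qmk 0 0 1 0) = -(qmk 0 0 1 0)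
      ext <;> simp
    · exact norm_of_normSq' (by show normSq (qmk 0 0 1 0) = 1; simp [Quaternion.normSq_def'])
    · obtain ⟨hb, hc⟩ := hbc
      show m * (qmk 0 0 1 0) = -((qmk 0 0 1 0) * m)
      ext <;>
        simp only [Quaternion.re_mul, Quaternion.imI_mul, Quaternion.imJ_mul,
          Quaternion.imK_mul, Quaternion.re_neg, Quaternion.imI_neg, Quaternion.imJ_neg,
          Quaternion.imK_neg, qmk_re, qmk_imI, qmk_imJ, qmk_imK, hre, hb, hc] <;> ring
  · have hs : (0:ℝ) < m.imJ^2 + m.imK^2 := by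
      rcases not_and_or.mp hbc with h | h <;> positivity
    set s := Real.sqrt (m.imJ^2 + m.imK^2) with hsdef
    have hs0 : 0 < s := Real.sqrt_pos.mpr hs
    have hss : s * s = m.imJ^2 + m.imK^2 := Real.mul_self_sqrt hs.le
    refine ⟨(qmk 0 0 (m.imK/s) (-m.imJ/s)), ⟨?_, ?_⟩, ?_⟩
    · show star (qmk 0 0 (m.imK/s) (-m.imJ/s)) = -(qmk 0 0 (m.imK/s) (-m.imJ/s))
      ext <;> simp
    · refine norm_of_normSq' ?_
      show normSq (qmk 0 0 (m.imK/s) (-m.imJ/s)) = 1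
      rw [Quaternion.normSq_def']
      simp only [qmk_re, qmk_imI, qmk_imJ, qmk_imK]
      field_simp
      linarith [hss]
    · show m * (qmk 0 0 (m.imK/s) (-m.imJ/s)) = -((qmk 0 0 (m.imK/s) (-m.imJ/s)) * m)
      ext <;>
        simp only [Quaternion.re_mul, Quaternion.imI_mul, Quaternion.imJ_mul,
          Quaternion.imK_mul, Quaternion.re_neg, Quaternion.imI_neg, Quaternion.imJ_neg,
          Quaternion.imK_neg, qmk_re, qmk_imI, qmk_imJ, qmk_imK, hre] <;> ring

end Aux

/-- An orthonormal basis of the slice Hilbert space `H₊^{Jm}` is an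
orthonormal basis of the quaternionic Hilbert space `H`. -/
theorem onBasis_slice_is_onBasis (J : Hsp → Hsp) (m : Hq) (hm : m ∈ QS)
    (hJlin : IsBoundedRightLinear J) (hJa : IsAntiSelfAdjoint J) (hJu : IsUnitaryOp J)
    (e : ℕ → Hsp) (he : IsONBasisOn (Hplus J m) e) :
    IsONBasisOn Set.univ e := by
  obtain ⟨hJadd, hJsm, -⟩ := hJlin
  obtain ⟨S, hS, hSJ, hJS⟩ := hJu
  -- basic facts about J
  have hJ0 : J 0 = 0 := by
    have h := hJadd 0 0
    simpa using h.symm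
  have hJneg : ∀ x, J (-x) = -(J x) := by
    intro x
    have h := hJadd x (-x)
    rw [add_neg_cancel, hJ0] at h
    exact (neg_eq_of_add_eq_zero_right h.symm).symm
  have hJsub : ∀ x y, J (x - y) = J x - J y := by
    intro x y
    rw [sub_eq_add_neg, hJadd, hJneg, sub_eq_add_neg]
  -- S = -J, hence J ∘ J = -id
  have hSy : ∀ y, S y = -(J y) := by
    intro y
    have hz : qinner (S y + J y) (S y + J y) = 0 := by
      have h2 := hJa (S y + J y) y
      rw [hS (S y + J y) y, qinner_neg_left'] at h2
      rw [qinner_add_left', h2, neg_add_cancel]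
    exact eq_neg_of_add_eq_zero_left (qinner_self_eq_zero' hz)
  have hJJ : ∀ x, J (J x) = -x := by
    intro x
    have h := hSJ x
    rw [hSy] at h
    exact neg_eq_iff_eq_neg.mp h
  -- the anticommuting unit imaginary quaternion n
  obtain ⟨n, hn, hmn⟩ := exists_anticomm' hm
  have hm2 : m * m = -1 := QS_mul_self' hm
  have hn2 : n * n = -1 := QS_mul_self' hn
  have hhalf_comm : ∀ q : Hq, ((2⁻¹ : ℝ) : Hq) * q = q * ((2⁻¹ : ℝ) : Hq) := fun q =>
    Quaternion.coe_commutes _ _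
  have hhalf2 : ((2⁻¹ : ℝ) : Hq) + ((2⁻¹ : ℝ) : Hq) = 1 := by
    rw [← Quaternion.coe_add]
    norm_num
  have hcomm_half : ∀ (q : Hq) (z : Hsp),
      rsmul q (rsmul ((2⁻¹ : ℝ) : Hq) z) = rsmul ((2⁻¹ : ℝ) : Hq) (rsmul q z) := by
    intro q z
    rw [rsmul_rsmul', rsmul_rsmul', hhalf_comm]
  have hmm : ∀ z : Hsp, rsmul m (rsmul m z) = -z := by
    intro z
    rw [rsmul_rsmul', hm2, rsmul_neg_one']
  refine ⟨fun r => trivial, he.2.1, fun x _ => ?_⟩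
  set xp : Hsp := rsmul ((2⁻¹ : ℝ) : Hq) (x - rsmul m (J x)) with hxp_def
  set xm : Hsp := rsmul ((2⁻¹ : ℝ) : Hq) (x + rsmul m (J x)) with hxm_def
  have hJA : J (rsmul m (J x)) = -(rsmul m x) := by rw [hJsm, hJJ, rsmul_neg']
  have hsum : xp + xm = x := by
    rw [hxp_def, hxm_def, ← rsmul_add']
    have h : x - rsmul m (J x) + (x + rsmul m (J x)) = x + x := by abel
    rw [h, rsmul_add', ← add_rsmul', hhalf2, rsmul_one']
  have hxp_mem : J xp = rsmul m xp := by
    rw [hxp_def, hJsm, hJsub, hJA, sub_neg_eq_add, hcomm_half, rsmul_sub', hmm,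
      sub_neg_eq_add, add_comm]
  have hxm_mem : J xm = -(rsmul m xm) := by
    have hLm : J xm = rsmul ((2⁻¹ : ℝ) : Hq) (J x - rsmul m x) := by
      rw [hxm_def, hJsm, hJadd, hJA, ← sub_eq_add_neg]
    have hRm : rsmul m xm = rsmul ((2⁻¹ : ℝ) : Hq) (rsmul m x - J x) := by
      rw [hxm_def, hcomm_half, rsmul_add', hmm, ← sub_eq_add_neg]
    rw [hLm, hRm, ← rsmul_neg', neg_sub]
  set w : Hsp := -(rsmul n xm) with hw_def
  have hw_mem : J w = rsmul m w := by
    have hL : J w = rsmul (m * n) xm := by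
      rw [hw_def, hJneg, hJsm, hxm_mem, rsmul_neg', neg_neg, rsmul_rsmul']
    have hR : rsmul m w = rsmul (m * n) xm := by
      rw [hw_def, rsmul_neg', rsmul_rsmul', ← neg_rsmul', ← hmn]
    rw [hL, hR]
  have hnw : rsmul n w = xm := by
    rw [hw_def, rsmul_neg', rsmul_rsmul', hn2, rsmul_neg_one', neg_neg]
  obtain ⟨-, -, hexp⟩ := he
  have h1 : HasSum (fun r => rsmul (qinner (e r) xp) (e r)) xp := hexp xp hxp_mem
  have h2 : HasSum (fun r => rsmul (qinner (e r) w) (e r)) w := hexp w hw_mem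
  have h2' : HasSum (fun r => rsmul n (rsmul (qinner (e r) w) (e r))) (rsmul n w) := by
    unfold rsmul
    exact h2.const_smul (MulOpposite.op n)
  simp only [rsmul_rsmul'] at h2'
  rw [hnw] at h2'
  have htot := h1.add h2'
  rw [hsum] at htot
  have hx' : x = xp + rsmul n w := by rw [hnw, ← hsum]
  have hterm : ∀ r, rsmul (qinner (e r) xp) (e r) + rsmul (qinner (e r) w * n) (e r)
      = rsmul (qinner (e r) x) (e r) := by
    intro r
    rw [← add_rsmul']
    congr 1
    rw [← qinner_rsmul_right' (e r) w n, ← qinner_add_right', ← hx']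
  have hfun : (fun r => rsmul (qinner (e r) xp) (e r) + rsmul (qinner (e r) w * n) (e r))
      = fun r => rsmul (qinner (e r) x) (e r) := funext hterm
  rw [hfun] at htot
  exact htot
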